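/- arXiv:2002.06625 — 2 statements merged into one kernel-verified Lean document; each statement's English description precedes it below -/
import Mathlib

section
/- Let H be a vector space, K and K′ two commensurable subspaces, and D a subspace. If D ∩ K and H/(D + K) are finite-dimensional, then D ∩ K′ and H/(D + K′) are also finite-dimensional. -/
/-- Two subspaces `V, W` of a vector space are commensurable if both
`V/(V ∩ W)` and `W/(V ∩ W)` are finite-dimensional. -/
def Commensurable' {F H : Type*} [Field F] [AddCommGroup H] [Module F H]
    (V W : Submodule F H) : Prop :=
  FiniteDimensional F (V ⧸ (V ⊓ W).comap V.subtype) ∧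
    FiniteDimensional F (W ⧸ (V ⊓ W).comap W.subtype)

/-- A vector space with a finite-dimensional subspace and finite-dimensional quotient
is finite-dimensional. -/
lemma fd_of_sub_quot {F X : Type*} [Field F] [AddCommGroup X] [Module F X]
    (S : Submodule F X) (hS : FiniteDimensional F S)
    (hQ : FiniteDimensional F (X ⧸ S)) : FiniteDimensional F X := by
  haveI := hS; haveI := hQ
  have h : IsNoetherian F X :=
    (isNoetherian_iff_submodule_quotient S).mpr ⟨inferInstance, inferInstance⟩
  exact IsNoetherian.iff_fg.mp h

/-- Passing down to a finite-codimension subspace preserves the Fredholm data. -/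
lemma step_down {F H : Type*} [Field F] [AddCommGroup H] [Module F H]
    (D K K' : Submodule F H) (hle : K' ≤ K)
    (hfd : FiniteDimensional F (K ⧸ K'.comap K.subtype))
    (h1 : FiniteDimensional F ↥(D ⊓ K)) (h2 : FiniteDimensional F (H ⧸ (D ⊔ K))) :
    FiniteDimensional F ↥(D ⊓ K') ∧ FiniteDimensional F (H ⧸ (D ⊔ K')) := by
  refine ⟨Submodule.finiteDimensional_of_le (inf_le_inf_left D hle), ?_⟩
  have hsup : D ⊔ K' ≤ D ⊔ K := sup_le_sup_left hle D
  -- the image N of (D ⊔ K) in H ⧸ (D ⊔ K')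
  set N : Submodule F (H ⧸ (D ⊔ K')) := (D ⊔ K).map (D ⊔ K').mkQ with hN
  -- the quotient by N is H ⧸ (D ⊔ K), finite-dimensional
  haveI := h2
  have hQ : FiniteDimensional F ((H ⧸ (D ⊔ K')) ⧸ N) :=
    LinearEquiv.finiteDimensional
      (Submodule.quotientQuotientEquivQuotient (D ⊔ K') (D ⊔ K) hsup).symm
  -- N is the image of K, hence a quotient of K ⧸ K', finite-dimensional
  have hker : K'.comap K.subtype ≤ LinearMap.ker ((D ⊔ K').mkQ.comp K.subtype) := by
    intro x hx
    simp only [LinearMap.mem_ker, LinearMap.comp_apply, Submodule.mkQ_apply,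
      Submodule.Quotient.mk_eq_zero]
    exact Submodule.mem_sup_right (Submodule.mem_comap.mp hx)
  let g : (K ⧸ K'.comap K.subtype) →ₗ[F] (H ⧸ (D ⊔ K')) :=
    Submodule.liftQ _ ((D ⊔ K').mkQ.comp K.subtype) hker
  have hrange : LinearMap.range g = N := by
    rw [Submodule.range_liftQ]
    have : LinearMap.range ((D ⊔ K').mkQ.comp K.subtype) = K.map (D ⊔ K').mkQ := by
      rw [LinearMap.range_comp, Submodule.range_subtype]
    rw [this, hN, Submodule.map_sup]
    have hD : D.map (D ⊔ K').mkQ ≤ K.map (D ⊔ K').mkQ := by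
      intro y hy
      obtain ⟨x, hx, rfl⟩ := hy
      have : (D ⊔ K').mkQ x = 0 := by
        simp [Submodule.Quotient.mk_eq_zero, le_sup_left (a := D) (b := K') hx]
      rw [this]
      exact Submodule.zero_mem _
    rw [sup_eq_right.mpr hD]
  haveI := hfd
  have hNfd : FiniteDimensional F N := by
    rw [← hrange]
    infer_instance
  exact fd_of_sub_quot N hNfd hQ

/-- Passing up by a finite-dimensional extension preserves the Fredholm data. -/
lemma step_up {F H : Type*} [Field F] [AddCommGroup H] [Module F H]
    (D M K' : Submodule F H) (hle : M ≤ K')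
    (hfd : FiniteDimensional F (K' ⧸ M.comap K'.subtype))
    (h1 : FiniteDimensional F ↥(D ⊓ M)) (h2 : FiniteDimensional F (H ⧸ (D ⊔ M))) :
    FiniteDimensional F ↥(D ⊓ K') ∧ FiniteDimensional F (H ⧸ (D ⊔ K')) := by
  constructor
  · -- map D ⊓ K' → K' ⧸ M with finite-dimensional kernel and range
    have hincl : D ⊓ K' ≤ K' := inf_le_right
    let g : ↥(D ⊓ K') →ₗ[F] (K' ⧸ M.comap K'.subtype) :=
      (M.comap K'.subtype).mkQ.comp (Submodule.inclusion hincl)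
    have hkerfd : FiniteDimensional F (LinearMap.ker g) := by
      have hle2 : D ⊓ M ≤ D ⊓ K' := inf_le_inf_left D hle
      haveI := h1
      have hcfd : FiniteDimensional F ((D ⊓ M).comap (D ⊓ K').subtype) :=
        LinearEquiv.finiteDimensional (Submodule.comapSubtypeEquivOfLe hle2).symm
      refine Submodule.finiteDimensional_of_le (S₂ := (D ⊓ M).comap (D ⊓ K').subtype) ?_
      intro x hx
      simp only [LinearMap.mem_ker, LinearMap.comp_apply, Submodule.mkQ_apply,
        Submodule.Quotient.mk_eq_zero, Submodule.mem_comap, g] at hx ⊢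
      exact ⟨x.2.1, hx⟩
    haveI := hfd
    have hqfd : FiniteDimensional F (↥(D ⊓ K') ⧸ LinearMap.ker g) :=
      LinearEquiv.finiteDimensional g.quotKerEquivRange.symm
    exact fd_of_sub_quot (LinearMap.ker g) hkerfd hqfd
  · -- H ⧸ (D ⊔ K') is a quotient of H ⧸ (D ⊔ M)
    have hsup : D ⊔ M ≤ D ⊔ K' := sup_le_sup_left hle D
    have hker : D ⊔ M ≤ LinearMap.ker (D ⊔ K').mkQ := by
      rw [Submodule.ker_mkQ]; exact hsup
    let f : (H ⧸ (D ⊔ M)) →ₗ[F] (H ⧸ (D ⊔ K')) :=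
      Submodule.liftQ _ (D ⊔ K').mkQ hker
    have hsurj : Function.Surjective f := by
      rw [← LinearMap.range_eq_top, Submodule.range_liftQ, Submodule.range_mkQ]
    haveI := h2
    exact Module.Finite.of_surjective f hsurj

/-- If `K` and `K′` are commensurable subspaces of `H` and `D` is a subspace such that
`D ∩ K` and `H/(D + K)` are finite-dimensional, then `D ∩ K′` and `H/(D + K′)` are
also finite-dimensional. -/
theorem fredholm_data_indep_of_commensurable
    {F H : Type*} [Field F] [AddCommGroup H] [Module F H]
    (D K K' : Submodule F H) (hKK' : Commensurable' K K')
    (h1 : FiniteDimensional F ↥(D ⊓ K)) (h2 : FiniteDimensional F (H ⧸ (D ⊔ K))) :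
    FiniteDimensional F ↥(D ⊓ K') ∧ FiniteDimensional F (H ⧸ (D ⊔ K')) := by
  obtain ⟨hm1, hm2⟩ := step_down D K (K ⊓ K') inf_le_left hKK'.1 h1 h2
  exact step_up D (K ⊓ K') K' inf_le_right hKK'.2 hm1 hm2
end

section
/- For the representation ϱ_j of the Witt algebra on j-differentials, given by ϱ_j(f∂)(g) = f g′ + j f′ g on ℂ[z,z⁻¹], the pullback of the Japanese cocycle satisfies ϱ_j*(η)(L_m, L_{−m}) = (6j² − 6j + 1) · ϱ_1*(η)(L_m, L_{−m}) for all integers m, where L_n = z^{−n+1}∂. -/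
/-- `ℂ[z,z⁻¹]`, with basis `zᵏ` indexed by `k : ℤ`. -/
abbrev LModel := ℤ →₀ ℂ

/-- The representation `ϱ_j` of the Witt algebra on `j`-differentials,
`ϱ_j(L_m) : zᵏ ↦ (k + j(1-m))·z^(k-m)`, coming from `ϱ_j(f∂)(g) = f g′ + j f′ g`
with `L_m = z^{-m+1}∂`. -/
noncomputable def rhoW (j m : ℤ) : Module.End ℂ LModel :=
  Finsupp.lsum ℂ fun k : ℤ => ((k : ℂ) + (j : ℂ) * (1 - (m : ℂ))) • Finsupp.lsingle (k - m)

/-- Projection of `H = ℂ[z,z⁻¹]` onto `H⁻ = z⁻¹ℂ[z⁻¹]`. -/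
noncomputable def projNeg : Module.End ℂ LModel :=
  Finsupp.lsum ℂ fun k : ℤ => if k < 0 then Finsupp.lsingle k else 0

/-- Projection of `H = ℂ[z,z⁻¹]` onto `H⁺ = ℂ[z]`. -/
noncomputable def projPos : Module.End ℂ LModel :=
  Finsupp.lsum ℂ fun k : ℤ => if 0 ≤ k then Finsupp.lsingle k else 0

/-- Trace of an operator with finitely supported diagonal, as the (finite) sum of its
diagonal matrix entries in the basis `zᵏ`. -/
noncomputable def diagTrace (T : Module.End ℂ LModel) : ℂ :=
  ∑ᶠ k : ℤ, T (Finsupp.single k 1) k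

/-- The Japanese cocycle `η(F,G) = tr(F^{−+}G^{+−} − G^{−+}F^{+−})` with respect to the
decomposition `H = H⁻ ⊕ H⁺` (the off-diagonal blocks are finite rank). -/
noncomputable def etaC (F G : Module.End ℂ LModel) : ℂ :=
  diagTrace (projNeg ∘ₗ F ∘ₗ projPos ∘ₗ G ∘ₗ projNeg) -
    diagTrace (projNeg ∘ₗ G ∘ₗ projPos ∘ₗ F ∘ₗ projNeg)

lemma rhoW_single (j m k : ℤ) :
    rhoW j m (Finsupp.single k 1) =
      ((k : ℂ) + (j : ℂ) * (1 - (m : ℂ))) • Finsupp.single (k - m) 1 := by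
  rw [rhoW, Finsupp.lsum_single]; simp

lemma projNeg_single (k : ℤ) :
    projNeg (Finsupp.single k 1) = if k < 0 then Finsupp.single k 1 else 0 := by
  rw [projNeg, Finsupp.lsum_single]; split_ifs <;> simp

lemma projPos_single (k : ℤ) :
    projPos (Finsupp.single k 1) = if 0 ≤ k then Finsupp.single k 1 else 0 := by
  rw [projPos, Finsupp.lsum_single]; split_ifs <;> simp

lemma entry (j m k : ℤ) :
    (projNeg ∘ₗ rhoW j m ∘ₗ projPos ∘ₗ rhoW j (-m) ∘ₗ projNeg) (Finsupp.single k 1) k =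
      if k < 0 ∧ 0 ≤ k + m then
        ((k : ℂ) + (j : ℂ) * (1 + (m : ℂ))) * (((k : ℂ) + (m : ℂ)) + (j : ℂ) * (1 - (m : ℂ)))
      else 0 := by
  simp only [LinearMap.comp_apply, projNeg_single]
  by_cases hk : k < 0
  · rw [if_pos hk, rhoW_single, map_smul, map_smul, map_smul, projPos_single]
    by_cases hkm : 0 ≤ k - (-m)
    · rw [if_pos hkm, rhoW_single]
      have hkk : k - -m - m = k := by omega
      rw [hkk, map_smul, projNeg_single, if_pos hk]
      have hkm' : 0 ≤ k + m := by omega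
      rw [if_pos ⟨hk, hkm'⟩]
      simp [Finsupp.single_apply]
      ring
    · have : ¬ (k < 0 ∧ 0 ≤ k + m) := by omega
      rw [if_neg hkm, if_neg this]
      simp
  · have : ¬ (k < 0 ∧ 0 ≤ k + m) := by omega
    rw [if_neg hk, if_neg this]
    simp

noncomputable def Asum (j m : ℤ) : ℂ :=
  ∑ i ∈ Finset.range m.toNat,
    (((i : ℂ) - (m : ℂ)) + (j : ℂ) * (1 + (m : ℂ))) * ((i : ℂ) + (j : ℂ) * (1 - (m : ℂ)))

lemma traceA (j m : ℤ) :
    diagTrace (projNeg ∘ₗ rhoW j m ∘ₗ projPos ∘ₗ rhoW j (-m) ∘ₗ projNeg) = Asum j m := by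
  rw [diagTrace]
  have hsupp : (Function.support fun k : ℤ =>
      (projNeg ∘ₗ rhoW j m ∘ₗ projPos ∘ₗ rhoW j (-m) ∘ₗ projNeg) (Finsupp.single k 1) k) ⊆
      ((Finset.range m.toNat).map ⟨fun i : ℕ => (i : ℤ) - m, fun a b h => by simp only at h; omega⟩ : Finset ℤ) := by
    intro k hk
    rw [Function.mem_support, entry] at hk
    have hcond : k < 0 ∧ 0 ≤ k + m := by
      by_contra h; rw [if_neg h] at hk; exact hk rfl
    simp only [Finset.coe_map, Set.mem_image, Finset.mem_coe, Finset.mem_range,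
      Function.Embedding.coeFn_mk]
    exact ⟨(k + m).toNat, by omega, by show (((k + m).toNat : ℕ) : ℤ) - m = k; omega⟩
  rw [finsum_eq_sum_of_support_subset _ hsupp, Finset.sum_map]
  apply Finset.sum_congr rfl
  intro i hi
  rw [Finset.mem_range] at hi
  change (projNeg ∘ₗ rhoW j m ∘ₗ projPos ∘ₗ rhoW j (-m) ∘ₗ projNeg) (Finsupp.single ((i : ℤ) - m) 1) ((i : ℤ) - m) = _
  rw [entry, if_pos (by omega)]
  have h1 : ((i : ℤ) - m + m : ℤ) = (i : ℤ) := by omega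
  push_cast
  ring

lemma sum_id (n : ℕ) : ∑ i ∈ Finset.range n, (i : ℂ) = n * (n - 1) / 2 := by
  induction n with
  | zero => simp
  | succ n ih => rw [Finset.sum_range_succ, ih]; push_cast; ring

lemma sum_sq (n : ℕ) : ∑ i ∈ Finset.range n, (i : ℂ) ^ 2 = n * (n - 1) * (2 * n - 1) / 6 := by
  induction n with
  | zero => simp
  | succ n ih => rw [Finset.sum_range_succ, ih]; push_cast; ring

lemma Asum_eq (j m : ℤ) :
    Asum j m = (6 * (j : ℂ) ^ 2 - 6 * (j : ℂ) + 1) * Asum 1 m := by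
  rcases le_or_gt m 0 with hm | hm
  · have : m.toNat = 0 := by omega
    simp [Asum, this]
  · have hM : ((m.toNat : ℕ) : ℂ) = (m : ℂ) := by
      have := Int.toNat_of_nonneg hm.le
      exact_mod_cast congrArg (Int.cast : ℤ → ℂ) this
    set n := m.toNat with hn
    have expand : ∀ (a b : ℂ), ∑ i ∈ Finset.range n, ((i : ℂ) + a) * ((i : ℂ) + b)
        = (∑ i ∈ Finset.range n, (i : ℂ) ^ 2) + (a + b) * (∑ i ∈ Finset.range n, (i : ℂ))
          + n * (a * b) := by
      intro a b
      have h : ∑ i ∈ Finset.range n, ((i : ℂ) + a) * ((i : ℂ) + b)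
          = ∑ i ∈ Finset.range n, ((i : ℂ) ^ 2 + ((a + b) * (i : ℂ) + a * b)) :=
        Finset.sum_congr rfl fun i _ => by ring
      rw [h, Finset.sum_add_distrib, Finset.sum_add_distrib, ← Finset.mul_sum,
        Finset.sum_const, Finset.card_range, nsmul_eq_mul]
      ring
    have e1 : Asum j m = ∑ i ∈ Finset.range n,
        ((i : ℂ) + ((j : ℂ) * (1 + (m : ℂ)) - (m : ℂ))) * ((i : ℂ) + (j : ℂ) * (1 - (m : ℂ))) := by
      unfold Asum
      exact Finset.sum_congr rfl fun i _ => by ring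
    have e2 : Asum 1 m = ∑ i ∈ Finset.range n,
        ((i : ℂ) + ((1 : ℂ) * (1 + (m : ℂ)) - (m : ℂ))) * ((i : ℂ) + (1 : ℂ) * (1 - (m : ℂ))) := by
      unfold Asum
      exact Finset.sum_congr rfl fun i _ => by push_cast; ring
    rw [e1, e2, expand, expand, sum_id, sum_sq, hM]
    ring

lemma etaC_eq' (j m : ℤ) :
    diagTrace (projNeg ∘ₗ rhoW j m ∘ₗ projPos ∘ₗ rhoW j (-m) ∘ₗ projNeg) -
      diagTrace (projNeg ∘ₗ rhoW j (-m) ∘ₗ projPos ∘ₗ rhoW j m ∘ₗ projNeg) =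
      Asum j m - Asum j (-m) := by
  rw [traceA]
  congr 1
  have := traceA j (-m)
  rwa [neg_neg] at this

/-- The pullback of the Japanese cocycle along `ϱ_j` satisfies
`ϱ_j*(η)(L_m, L_{−m}) = (6j² − 6j + 1)·ϱ_1*(η)(L_m, L_{−m})` for all `m`. -/
theorem rho_pullback_cocycle (j m : ℤ) :
    etaC (rhoW j m) (rhoW j (-m)) =
      (6 * (j : ℂ) ^ 2 - 6 * (j : ℂ) + 1) * etaC (rhoW 1 m) (rhoW 1 (-m)) := by
  rw [etaC, etaC, etaC_eq', etaC_eq', Asum_eq j m, Asum_eq j (-m)]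
  ring
end
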